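/- For every n ≥ 1, there exists a connected graph G on n vertices, not isomorphic to the triangle K₃, such that every cycle isolating set of G has size at least ⌊n/4⌋ and some cycle isolating set of G has size exactly ⌊n/4⌋; that is, ι_c(G) = ⌊n/4⌋. -/

import Mathlib

open SimpleGraph

/-- The closed neighbourhood `N[D]` of a set `D` of vertices of `G`. -/
def closedNbhd {V : Type*} (G : SimpleGraph V) (D : Set V) : Set V :=
  D ∪ ⋃ u ∈ D, G.neighborSet u

/-- `D` is a cycle isolating set of `G`: `G − N[D]` contains no cycle. -/
def IsCycleIsolating {V : Type*} (G : SimpleGraph V) (D : Set V) : Prop :=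
  (G.induce (closedNbhd G D)ᶜ).IsAcyclic

/-- `ι_c(G)`: the size of a smallest cycle isolating set of `G`. -/
noncomputable def iotaC {V : Type*} (G : SimpleGraph V) : ℕ :=
  sInf {k | ∃ D : Set V, IsCycleIsolating G D ∧ D.ncard = k}

/-- For every `n ≥ 1`, there exists a connected graph `G` on `n` vertices,
not isomorphic to `K₃`, such that every cycle isolating set of `G` has size at
least `⌊n/4⌋`, some cycle isolating set has size exactly `⌊n/4⌋`,
and hence `ι_c(G) = ⌊n/4⌋`. -/

lemma triangle_not_acyclic {V : Type*} {G : SimpleGraph V} {a b c : V}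
    (hab : G.Adj a b) (hbc : G.Adj b c) (hca : G.Adj c a) : ¬ G.IsAcyclic := by
  intro h
  have hne1 : a ≠ b := hab.ne
  have hne2 : b ≠ c := hbc.ne
  have hne3 : c ≠ a := hca.ne
  exact h (Walk.cons hab (Walk.cons hbc (Walk.cons hca Walk.nil)))
    (by
      simp [Walk.isCycle_def, Walk.isTrail_def, Sym2.eq_iff]
      tauto)

def relE (k a b : ℕ) : Prop :=
  (b = a + 1 ∧ (a % 4 ≠ 3 ∨ 4*k ≤ b)) ∨ (b = a + 2 ∧ a % 4 = 0 ∧ b < 4*k) ∨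
    (b = a + 4 ∧ a % 4 = 3 ∧ b < 4*k)

def GG (n : ℕ) : SimpleGraph (Fin n) :=
  SimpleGraph.fromRel (fun a b => relE (n/4) a.val b.val)

lemma GG_adj {n : ℕ} {a b : Fin n} :
    (GG n).Adj a b ↔ a.val ≠ b.val ∧ (relE (n/4) a.val b.val ∨ relE (n/4) b.val a.val) := by
  simp only [GG, fromRel_adj, ne_eq, Fin.val_eq_val]

def mu (k v : ℕ) : ℕ :=
  if v ≤ 2 then v else if 4*k ≤ v then v + k + 6
  else if v % 4 = 3 then 3 + v/4 else if v % 4 = 2 then 4 + v/4 else 5 + v/4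

lemma desc_nat (n a : ℕ) (ha : a < n) (h0 : a ≠ 0) :
    ∃ b, b < n ∧ b ≠ a ∧ (relE (n/4) a b ∨ relE (n/4) b a) ∧ mu (n/4) b < mu (n/4) a := by
  set k := n / 4 with hk
  have hk4 : 4 * k ≤ n ∧ n < 4 * k + 4 := by omega
  by_cases h1 : a = 1
  · exact ⟨0, by omega, by omega, by unfold relE; omega, by unfold mu; split_ifs <;> omega⟩
  by_cases h2 : a = 2
  · rcases Nat.eq_zero_or_pos k with hk0 | hk1
    · exact ⟨1, by omega, by omega, by unfold relE; omega, by unfold mu; split_ifs <;> omega⟩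
    · exact ⟨0, by omega, by omega, by unfold relE; omega, by unfold mu; split_ifs <;> omega⟩
  by_cases h3 : 4*k ≤ a
  · exact ⟨a - 1, by omega, by omega, by unfold relE; omega, by unfold mu; split_ifs <;> omega⟩
  by_cases h4 : a % 4 = 3
  · by_cases h5 : a = 3
    · exact ⟨2, by omega, by omega, by unfold relE; omega, by unfold mu; split_ifs <;> omega⟩
    · exact ⟨a - 4, by omega, by omega, by unfold relE; omega, by unfold mu; split_ifs <;> omega⟩
  by_cases h6 : a % 4 = 2
  · exact ⟨a + 1, by omega, by omega, by unfold relE; omega, by unfold mu; split_ifs <;> omega⟩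
  by_cases h7 : a % 4 = 1
  · exact ⟨a + 1, by omega, by omega, by unfold relE; omega, by unfold mu; split_ifs <;> omega⟩
  · exact ⟨a + 2, by omega, by omega, by unfold relE; omega, by unfold mu; split_ifs <;> omega⟩

lemma GG_connected (n : ℕ) (hn : 1 ≤ n) : (GG n).Connected := by
  have key : ∀ m (v : Fin n), mu (n/4) v.val < m → (GG n).Reachable v ⟨0, hn⟩ := by
    intro m
    induction m with
    | zero => intro v h; omega
    | succ m ih =>
      intro v hv
      by_cases hv0 : v.val = 0
      · have hveq : v = ⟨0, hn⟩ := Fin.ext hv0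
        rw [hveq]
      · obtain ⟨b, hbn, hne, hrel, hmu⟩ := desc_nat n v.val v.isLt hv0
        have hne' : v.val ≠ (⟨b, hbn⟩ : Fin n).val := by
          simp only [Fin.val_mk]; omega
        have hadj : (GG n).Adj v ⟨b, hbn⟩ := GG_adj.mpr ⟨hne', hrel⟩
        have hmu' : mu (n/4) (⟨b, hbn⟩ : Fin n).val < m := by
          simp only [Fin.val_mk]; omega
        exact hadj.reachable.trans (ih ⟨b, hbn⟩ hmu')
  rw [connected_iff]
  refine ⟨fun u v => (key _ u (Nat.lt_succ_self _)).trans (key _ v (Nat.lt_succ_self _)).symm,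
    ⟨⟨0, hn⟩⟩⟩

lemma GG_lower (n : ℕ) (D : Set (Fin n)) (hD : IsCycleIsolating (GG n) D) :
    n/4 ≤ D.ncard := by
  classical
  set k := n/4 with hk
  have hhit : ∀ i : Fin k, ∃ d : Fin n, d ∈ D ∧ 4*i.val ≤ d.val ∧ d.val ≤ 4*i.val+3 := by
    intro i
    by_contra hcon
    push_neg at hcon
    have hik : i.val < k := i.isLt
    have h2 : 4*i.val + 2 < n := by omega
    have hmem : ∀ t : Fin n, (t.val = 4*i.val ∨ t.val = 4*i.val+1 ∨ t.val = 4*i.val+2) →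
        t ∈ (closedNbhd (GG n) D)ᶜ := by
      intro t ht
      rw [Set.mem_compl_iff, closedNbhd, Set.mem_union]
      push_neg
      constructor
      · intro htD
        have := hcon t htD
        omega
      · intro hU
        obtain ⟨u, hu, hadj⟩ := Set.mem_iUnion₂.mp hU
        rw [mem_neighborSet, GG_adj] at hadj
        have := hcon u hu
        unfold relE at hadj
        omega
    set x : Fin n := ⟨4*i.val, by omega⟩ with hkey
    set y : Fin n := ⟨4*i.val+1, by omega⟩
    set z : Fin n := ⟨4*i.val+2, by omega⟩
    have hX : x ∈ (closedNbhd (GG n) D)ᶜ := hmem x (by simp [x])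
    have hY : y ∈ (closedNbhd (GG n) D)ᶜ := hmem y (by simp [y])
    have hZ : z ∈ (closedNbhd (GG n) D)ᶜ := hmem z (by simp [z])
    have hxy : ((GG n).induce (closedNbhd (GG n) D)ᶜ).Adj ⟨x, hX⟩ ⟨y, hY⟩ := by
      simp only [comap_adj, Function.Embedding.coe_subtype]
      exact GG_adj.mpr ⟨by simp [x, y], Or.inl (by unfold relE; simp [x, y] <;> omega)⟩
    have hyz : ((GG n).induce (closedNbhd (GG n) D)ᶜ).Adj ⟨y, hY⟩ ⟨z, hZ⟩ := by
      simp only [comap_adj, Function.Embedding.coe_subtype]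
      exact GG_adj.mpr ⟨by simp [y, z], Or.inl (by unfold relE; simp [y, z] <;> omega)⟩
    have hzx : ((GG n).induce (closedNbhd (GG n) D)ᶜ).Adj ⟨z, hZ⟩ ⟨x, hX⟩ := by
      simp only [comap_adj, Function.Embedding.coe_subtype]
      exact GG_adj.mpr ⟨by simp [z, x], Or.inr (by unfold relE; simp [z, x] <;> omega)⟩
    exact triangle_not_acyclic hxy hyz hzx hD
  choose f hfD hfr using hhit
  have hinj : Function.Injective f := by
    intro i j hij
    have h1 := hfr i
    have h2 := hfr j
    rw [hij] at h1
    exact Fin.ext (by omega)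
  have hsub : Finset.image f Finset.univ ⊆ D.toFinset := by
    intro d hd
    obtain ⟨i, _, rfl⟩ := Finset.mem_image.mp hd
    exact Set.mem_toFinset.mpr (hfD i)
  calc k = (Finset.image f Finset.univ).card := by
        rw [Finset.card_image_of_injective _ hinj, Finset.card_univ, Fintype.card_fin]
    _ ≤ D.toFinset.card := Finset.card_le_card hsub
    _ = D.ncard := (Set.ncard_eq_toFinset_card' D).symm

lemma matching_acyclic {V : Type*} {G : SimpleGraph V}
    (h : ∀ u v w : V, G.Adj u v → G.Adj v w → u = w) : G.IsAcyclic := by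
  intro v c hc
  have h3 := hc.three_le_length
  match c with
  | .nil => simp at h3
  | .cons h1 .nil => simp at h3
  | @Walk.cons _ _ _ x _ h1 (@Walk.cons _ _ _ y _ h2 q) =>
    have hvy : v = y := h _ _ _ h1 h2
    subst hvy
    have hnd := hc.2
    simp only [Walk.support_cons, List.tail_cons] at hnd
    match q with
    | .nil => simp at h3
    | .cons h4 r =>
      have hv : v ∈ (Walk.cons h4 r).support.tail := by
        simp only [Walk.support_cons, List.tail_cons]
        exact r.end_mem_support
      rw [Walk.support_cons] at hnd
      exact ((List.nodup_cons.mp (List.nodup_cons.mp hnd).2).1) hv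

lemma small_trianglefree_acyclic {V : Type*} [Fintype V] {G : SimpleGraph V}
    (hcard : Fintype.card V ≤ 3)
    (htf : ∀ a b c : V, G.Adj a b → G.Adj b c → G.Adj c a → False) : G.IsAcyclic := by
  intro v c hc
  have h3 := hc.three_le_length
  have hle : c.length ≤ 3 := by
    have hnd := hc.2
    have h1 := hnd.length_le_card
    have h2 := c.length_support
    have hl : c.support.tail.length = c.length := by
      simp only [List.length_tail, h2]; omega
    omega
  have hlen : c.length = 3 := le_antisymm hle h3
  clear h3 hle hc
  cases c with
  | nil => simp at hlen
  | cons h1 p =>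
    cases p with
    | nil => simp at hlen
    | cons h2 q =>
      cases q with
      | nil => simp at hlen
      | cons h3' s =>
        cases s with
        | nil => exact htf _ _ _ h1 h2 h3'
        | cons h4 t => simp [Walk.length_cons] at hlen

lemma GG_upper (n : ℕ) : ∃ D : Set (Fin n), IsCycleIsolating (GG n) D ∧ D.ncard = n/4 := by
  classical
  set k := n/4 with hk
  refine ⟨{v : Fin n | v.val % 4 = 3 ∧ v.val < 4*k}, ?_, ?_⟩
  · -- cycle isolating
    rcases Nat.eq_zero_or_pos k with hk0 | hk1
    · -- n ≤ 3 : whole graph is triangle-free and small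
      haveI : Fintype ↥((closedNbhd (GG n) {v : Fin n | v.val % 4 = 3 ∧ v.val < 4*k})ᶜ) :=
        Fintype.ofFinite _
      apply small_trianglefree_acyclic
      · calc Fintype.card ↥((closedNbhd (GG n) {v : Fin n | v.val % 4 = 3 ∧ v.val < 4*k})ᶜ)
            ≤ Fintype.card (Fin n) := Fintype.card_le_of_injective _ Subtype.val_injective
          _ ≤ 3 := by rw [Fintype.card_fin]; omega
      · intro a b c hab hbc hca
        simp only [comap_adj, Function.Embedding.coe_subtype] at hab hbc hca
        rw [GG_adj] at hab hbc hca
        obtain ⟨hne1, hr1⟩ := hab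
        obtain ⟨hne2, hr2⟩ := hbc
        obtain ⟨hne3, hr3⟩ := hca
        unfold relE at hr1 hr2 hr3
        omega
    · -- k ≥ 1 : complement is a matching
      apply matching_acyclic
      intro u v w huv hvw
      simp only [comap_adj, Function.Embedding.coe_subtype] at huv hvw
      have hcompl : ∀ x : Fin n,
          x ∈ (closedNbhd (GG n) {v : Fin n | v.val % 4 = 3 ∧ v.val < 4*k})ᶜ →
          (x.val < 4*k ∧ (x.val % 4 = 0 ∨ x.val % 4 = 1)) ∨ 4*k < x.val := by
        intro x hx
        rw [Set.mem_compl_iff, closedNbhd, Set.mem_union] at hx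
        push_neg at hx
        obtain ⟨hx1, hx2⟩ := hx
        have hxD : ¬(x.val % 4 = 3 ∧ x.val < 4*k) := hx1
        have hnadj : ∀ u : Fin n, (u.val % 4 = 3 ∧ u.val < 4*k) → ¬ (GG n).Adj u x := by
          intro u hu hadj
          exact hx2 (Set.mem_iUnion₂.mpr ⟨u, hu, hadj⟩)
        by_cases hc2 : x.val % 4 = 2 ∧ x.val < 4*k
        · exfalso
          refine hnadj ⟨x.val+1, by omega⟩ ⟨by simp <;> omega, by simp <;> omega⟩ ?_
          exact GG_adj.mpr ⟨by simp <;> omega, Or.inr (by unfold relE; simp <;> omega)⟩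
        by_cases hc3 : x.val = 4*k
        · exfalso
          have hlt : 4*k - 1 < n := by omega
          refine hnadj ⟨4*k - 1, hlt⟩ ⟨by simp <;> omega, by simp <;> omega⟩ ?_
          exact GG_adj.mpr ⟨by simp <;> omega, Or.inl (by unfold relE; simp <;> omega)⟩
        · omega
      have pu := hcompl u.val u.2
      have pv := hcompl v.val v.2
      have pw := hcompl w.val w.2
      rw [GG_adj] at huv hvw
      obtain ⟨hne1, hr1⟩ := huv
      obtain ⟨hne2, hr2⟩ := hvw
      unfold relE at hr1 hr2
      have : (u.val : Fin n).val = (w.val : Fin n).val := by omega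
      exact Subtype.ext (Fin.ext this)
  · -- cardinality
    have hrange : {v : Fin n | v.val % 4 = 3 ∧ v.val < 4*k} =
        Set.range (fun i : Fin k => (⟨4*i.val+3, by have := i.isLt; omega⟩ : Fin n)) := by
      ext v
      simp only [Set.mem_setOf_eq, Set.mem_range]
      constructor
      · rintro ⟨hm, hlt⟩
        exact ⟨⟨v.val/4, by omega⟩, Fin.ext (by simp; omega)⟩
      · rintro ⟨i, rfl⟩
        have := i.isLt
        simp
        omega
    rw [hrange]
    have hinj : Function.Injective
        (fun i : Fin k => (⟨4*i.val+3, by have := i.isLt; omega⟩ : Fin n)) := by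
      intro i j hij
      simp only [Fin.mk.injEq] at hij
      exact Fin.ext (by omega)
    rw [← Nat.card_coe_set_eq, Nat.card_range_of_injective hinj, Nat.card_eq_fintype_card,
      Fintype.card_fin]

lemma GG_noniso (n : ℕ) : IsEmpty ((GG n) ≃g (⊤ : SimpleGraph (Fin 3))) := by
  constructor
  intro e
  have h3 : n = 3 := by
    have := Fintype.card_congr e.toEquiv
    simpa using this
  subst h3
  have hne : e ⟨0, by omega⟩ ≠ e ⟨2, by omega⟩ := by
    intro h
    have := e.toEquiv.injective h
    simp [Fin.ext_iff] at this
  have hadj : (GG 3).Adj ⟨0, by omega⟩ ⟨2, by omega⟩ := e.map_adj_iff.mp (by simpa using hne)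
  rw [GG_adj] at hadj
  obtain ⟨-, hr⟩ := hadj
  unfold relE at hr
  simp at hr

theorem stmt2 (n : ℕ) (hn : 1 ≤ n) :
    ∃ G : SimpleGraph (Fin n), G.Connected ∧
      IsEmpty (G ≃g (⊤ : SimpleGraph (Fin 3))) ∧
      (∀ D : Set (Fin n), IsCycleIsolating G D → n / 4 ≤ D.ncard) ∧
      (∃ D : Set (Fin n), IsCycleIsolating G D ∧ D.ncard = n / 4) ∧
      iotaC G = n / 4 := by
  obtain ⟨D₀, hD₀, hc₀⟩ := GG_upper n
  refine ⟨GG n, GG_connected n hn, GG_noniso n, fun D hD => GG_lower n D hD,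
    ⟨D₀, hD₀, hc₀⟩, ?_⟩
  refine le_antisymm (Nat.sInf_le ⟨D₀, hD₀, hc₀⟩)
    (le_csInf ⟨_, ⟨D₀, hD₀, hc₀⟩⟩ ?_)
  rintro m ⟨D, hD, rfl⟩
  exact GG_lower n D hD
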